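/- Let S ⊆ {(i,j) : 1 ≤ i < j ≤ n} be a set of edges such that the vectors {e_i + f_j : (i,j) ∈ S} ⊂ ℝⁿ ⊕ ℝⁿ are linearly independent (e_i, f_j standard basis vectors of the two summands). Then |S| ≤ 2n − 3, and for every subset W ⊆ {1,…,n} with |W| = k ≥ 2, the number of edges of S with both endpoints in W is at most 2k − 3. -/

import Mathlib

open Finset Submodule Module

private lemma aux_stmt14 (n : ℕ) (S : Finset (Fin n × Fin n)) (hS : ∀ p ∈ S, p.1 < p.2)
    (hind : LinearIndependent ℝ
      (fun p : S =>
        ((Pi.single (p : Fin n × Fin n).1 1, Pi.single (p : Fin n × Fin n).2 1) :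
          (Fin n → ℝ) × (Fin n → ℝ))))
    (W : Finset (Fin n)) (hW : 2 ≤ W.card) :
    (S.filter (fun p => p.1 ∈ W ∧ p.2 ∈ W)).card ≤ 2 * W.card - 3 := by
  classical
  set V := ((Fin n → ℝ) × (Fin n → ℝ))
  set v : Fin n × Fin n → V := fun p => (Pi.single p.1 1, Pi.single p.2 1) with hv
  set T := S.filter (fun p => p.1 ∈ W ∧ p.2 ∈ W) with hT
  have hTS : T ⊆ S := Finset.filter_subset _ _
  have hne : W.Nonempty := Finset.card_pos.mp (by omega)
  set a := W.max' hne with ha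
  set b := W.min' hne with hb
  have hab : b < a := W.min'_lt_max'_of_card (by omega)
  -- the linear functional x ↦ Σ x.1 − Σ x.2
  let φ : V →ₗ[ℝ] ℝ :=
    { toFun := fun x => (∑ i, x.1 i) - (∑ i, x.2 i)
      map_add' := by
        intro x y
        show (∑ i, (x.1 i + y.1 i)) - (∑ i, (x.2 i + y.2 i)) = _
        rw [Finset.sum_add_distrib, Finset.sum_add_distrib]
        ring
      map_smul' := by
        intro c x
        show (∑ i, c * x.1 i) - (∑ i, c * x.2 i) = c * ((∑ i, x.1 i) - ∑ i, x.2 i)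
        rw [← Finset.mul_sum, ← Finset.mul_sum]
        ring }
  set A : Finset V :=
    ((W.erase a).image fun i => ((Pi.single i 1, 0) : V)) ∪
      ((W.erase b).image fun j => ((0, Pi.single j 1) : V)) with hA
  set U : Submodule ℝ V := span ℝ (A : Set V) with hU
  have hUfin : finrank ℝ U ≤ 2 * W.card - 2 := by
    refine le_trans (finrank_span_finset_le_card (A : Finset V)) ?_
    refine le_trans (Finset.card_union_le _ _) ?_
    have h1 := Finset.card_image_le (s := W.erase a)
      (f := fun i => ((Pi.single i 1, 0) : V))
    have h2 := Finset.card_image_le (s := W.erase b)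
      (f := fun j => ((0, Pi.single j 1) : V))
    have e1 : (W.erase a).card = W.card - 1 := Finset.card_erase_of_mem (W.max'_mem hne)
    have e2 : (W.erase b).card = W.card - 1 := Finset.card_erase_of_mem (W.min'_mem hne)
    omega
  have hsum : ∀ i : Fin n, (∑ j, (Pi.single i 1 : Fin n → ℝ) j) = 1 := by
    intro i
    simp [Pi.single_apply]
  -- every edge vector of T lies in U ⊓ ker φ
  have hmem : ∀ p ∈ T, v p ∈ U ⊓ LinearMap.ker φ := by
    intro p hp
    rw [Finset.mem_filter] at hp
    obtain ⟨hpS, hp1, hp2⟩ := hp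
    have hlt := hS p hpS
    constructor
    · have h1 : ((Pi.single p.1 1, 0) : V) ∈ U := by
        apply subset_span
        apply Finset.mem_coe.mpr
        apply Finset.mem_union_left
        exact Finset.mem_image_of_mem _ (Finset.mem_erase.mpr
          ⟨ne_of_lt (lt_of_lt_of_le hlt (W.le_max' _ hp2)), hp1⟩)
      have h2 : ((0, Pi.single p.2 1) : V) ∈ U := by
        apply subset_span
        apply Finset.mem_coe.mpr
        apply Finset.mem_union_right
        exact Finset.mem_image_of_mem _ (Finset.mem_erase.mpr
          ⟨(ne_of_lt (lt_of_le_of_lt (W.min'_le _ hp1) hlt)).symm, hp2⟩)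
      have e : v p = (Pi.single p.1 1, 0) + ((0, Pi.single p.2 1) : V) := by
        rw [Prod.mk_add_mk, add_zero, zero_add]
      rw [e]
      exact U.add_mem h1 h2
    · show (∑ i, (v p).1 i) - (∑ i, (v p).2 i) = 0
      simp [hv, hsum]
  -- U ⊓ ker φ is strictly smaller than U
  have hwb : ((Pi.single b 1, 0) : V) ∈ U := by
    apply subset_span
    apply Finset.mem_coe.mpr
    apply Finset.mem_union_left
    exact Finset.mem_image_of_mem _ (Finset.mem_erase.mpr ⟨ne_of_lt hab, W.min'_mem hne⟩)
  have hlt : U ⊓ LinearMap.ker φ < U := by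
    refine lt_of_le_of_ne inf_le_left (fun h => ?_)
    have : ((Pi.single b 1, 0) : V) ∈ U ⊓ LinearMap.ker φ := by rw [h]; exact hwb
    have hker := this.2
    change φ ((Pi.single b 1, 0) : V) = 0 at hker
    have : (∑ i, (Pi.single b 1 : Fin n → ℝ) i) - (∑ i, (0 : Fin n → ℝ) i) = 0 := hker
    rw [hsum] at this
    simp at this
  have hIU : finrank ℝ ↥(U ⊓ LinearMap.ker φ) < finrank ℝ U :=
    Submodule.finrank_lt_finrank_of_lt hlt
  -- the edge vectors of T are independent
  have hindT : LinearIndependent ℝ (fun p : T => v (p : Fin n × Fin n)) := by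
    have := hind.comp (fun p : T => (⟨p.1, hTS p.2⟩ : S))
      (fun p q h => Subtype.ext (by have h' := congrArg Subtype.val h; exact h'))
    exact this
  have hspan : span ℝ (Set.range fun p : T => v (p : Fin n × Fin n)) ≤
      U ⊓ LinearMap.ker φ := by
    rw [span_le]
    rintro x ⟨p, rfl⟩
    exact hmem p p.2
  have hcard : T.card ≤ finrank ℝ ↥(U ⊓ LinearMap.ker φ) := by
    have h1 : finrank ℝ (span ℝ (Set.range fun p : T => v (p : Fin n × Fin n))) =
        Fintype.card T := finrank_span_eq_card hindT
    have h2 := Submodule.finrank_mono hspan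
    rw [h1, Fintype.card_coe] at h2
    exact h2
  omega

/-- if the vectors `e_i + f_j ∈ ℝⁿ ⊕ ℝⁿ`, `(i,j) ∈ S` (with
`i < j`), are linearly independent then `|S| ≤ 2n − 3` and every vertex subset
`W` with `|W| = k ≥ 2` spans at most `2k − 3` edges of `S`. -/
theorem stmt_14 (n : ℕ) (S : Finset (Fin n × Fin n)) (hS : ∀ p ∈ S, p.1 < p.2)
    (hind : LinearIndependent ℝ
      (fun p : S =>
        ((Pi.single (p : Fin n × Fin n).1 1, Pi.single (p : Fin n × Fin n).2 1) :
          (Fin n → ℝ) × (Fin n → ℝ)))) :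
    S.card ≤ 2 * n - 3 ∧
      ∀ W : Finset (Fin n), 2 ≤ W.card →
        (S.filter (fun p => p.1 ∈ W ∧ p.2 ∈ W)).card ≤ 2 * W.card - 3 := by
  refine ⟨?_, fun W hW => aux_stmt14 n S hS hind W hW⟩
  by_cases hn : 2 ≤ n
  · have := aux_stmt14 n S hS hind Finset.univ (by simpa using hn)
    simpa [Finset.filter_true_of_mem] using this
  · have : S = ∅ := by
      rw [Finset.eq_empty_iff_forall_notMem]
      intro p hp
      have := hS p hp
      omega
    simp [this]
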